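/- Let G be an edge-weighted graph, H a minimum-weight f-factor, T ⊆ E(G) \ E(H), and H' a minimum-weight f-factor among those containing T. Let S be a decomposition of E(H) Δ E(H') into edge-disjoint minimal alternating circuits. For any subfamily S' ⊆ S whose union of edge sets contains T, the f-factor Switching(H, S') has weight exactly w(H'). -/

import Mathlib

open SimpleGraph

variable {V : Type*}

/-- The quotient multigraph `H/Q` of a graph by a partition (setoid), with parts adjacent
iff some edge of `H` joins them. -/
def quotGraph (H : SimpleGraph V) (s : Setoid V) : SimpleGraph (Quotient s) where
  Adj x y := x ≠ y ∧ ∃ u v : V, Quotient.mk s u = x ∧ Quotient.mk s v = y ∧ H.Adj u v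
  symm := ⟨by rintro x y ⟨h, u, v, hu, hv, ha⟩; exact ⟨h.symm, v, u, hv, hu, ha.symm⟩⟩
  loopless := ⟨by rintro x ⟨h, _⟩; exact h rfl⟩

/-- `H` connects the partition `Q` if the quotient `H/Q` is connected. -/
def Connects (H : SimpleGraph V) (s : Setoid V) : Prop := (quotGraph H s).Connected

/-- `H` is an `f`-factor of `G`: a spanning subgraph with degree `f v` at each vertex. -/
def IsFFactor (G H : SimpleGraph V) (f : V → ℕ) : Prop :=
  H ≤ G ∧ ∀ v : V, (H.neighborSet v).ncard = f v

/-- A list of edges alternates in color, cyclically (consecutive edges have distinct colors,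
including the last/first pair for a closed tour). -/
def AltChain (red : Sym2 V → Prop) (l : List (Sym2 V)) : Prop :=
  List.Chain' (fun e f => ¬ (red e ↔ red f)) (l ++ l.take 1)

/-- `S` is an alternating circuit: it admits a closed Eulerian tour in which every pair
of consecutive edges have different colors. -/
def IsAlternatingCircuit (S : SimpleGraph V) (red : Sym2 V → Prop) : Prop :=
  letI := Classical.decEq V
  ∃ (v : V) (w : S.Walk v v), w.IsEulerian ∧ AltChain red w.edges

/-- The subgraph of `T` consisting of a single connected component `K`. -/
def compGraph (T : SimpleGraph V) (K : T.ConnectedComponent) : SimpleGraph V where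
  Adj u v := T.Adj u v ∧ T.connectedComponentMk u = K
  symm := ⟨by
    rintro u v ⟨h, hk⟩
    exact ⟨h.symm, (ConnectedComponent.sound h.symm.reachable).trans hk⟩⟩
  loopless := ⟨by rintro v ⟨h, _⟩; exact h.ne rfl⟩

/-- `S` is a switch on `H`: coloring edges of `S ∩ H` red and edges of `S \ H` blue,
every connected component of `S` is an alternating circuit. -/
def IsSwitch (S H : SimpleGraph V) : Prop :=
  ∀ K : S.ConnectedComponent, IsAlternatingCircuit (compGraph S K) (fun e => e ∈ H.edgeSet)

/-- A minimal alternating circuit: each vertex has at most two red and two blue incident edges. -/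
def IsMinimalAC (S : SimpleGraph V) (red : Sym2 V → Prop) : Prop :=
  IsAlternatingCircuit S red ∧ ∀ v : V,
    {u | S.Adj v u ∧ red s(v, u)}.ncard ≤ 2 ∧ {u | S.Adj v u ∧ ¬ red s(v, u)}.ncard ≤ 2

/-- `Switching(H, T)`: remove the edges of `T ∩ H` from `H` and add the edges of `T \ H`. -/
def switching (H T : SimpleGraph V) : SimpleGraph V where
  Adj u v := (H.Adj u v ∧ ¬ T.Adj u v) ∨ (T.Adj u v ∧ ¬ H.Adj u v)
  symm := ⟨by
    rintro u v (⟨h1, h2⟩ | ⟨h1, h2⟩)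
    · exact Or.inl ⟨h1.symm, fun h => h2 h.symm⟩
    · exact Or.inr ⟨h1.symm, fun h => h2 h.symm⟩⟩
  loopless := ⟨by rintro v (⟨h, _⟩ | ⟨h, _⟩) <;> exact h.ne rfl⟩

/-- Total weight of the edges of a graph. -/
noncomputable def wt (w : Sym2 V → ℝ) (G : SimpleGraph V) : ℝ := ∑ᶠ e ∈ G.edgeSet, w e


section Aux

open List

variable {α : Type*} {R : α → α → Prop}

private lemma cycChain_rotate_one {l : List α} (h : List.Chain' R (l ++ l.take 1)) :
    List.Chain' R (l.rotate 1 ++ (l.rotate 1).take 1) := by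
  match l with
  | [] => simpa using h
  | [a] => simpa using h
  | a :: b :: t =>
    have hrot : (a :: b :: t).rotate 1 = (b :: t) ++ [a] := by
      simp [List.rotate_cons_succ]
    rw [hrot]
    have h' : List.Chain' R (a :: ((b :: t) ++ [a])) := by
      simpa using h
    rw [(show ∀ (r : α → α → Prop) (l : List α), List.Chain' r l ↔ List.IsChain r l from fun _ _ => Iff.rfl), List.isChain_cons] at h'
    obtain ⟨hab, hrest⟩ := h'
    have hRab : R a b := by simpa using hab b
    have htake : (((b :: t) ++ [a])).take 1 = [b] := by simp
    rw [htake]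
    rw [(show ∀ (r : α → α → Prop) (l : List α), List.Chain' r l ↔ List.IsChain r l from fun _ _ => Iff.rfl), List.isChain_append]
    refine ⟨hrest, by simp, ?_⟩
    intro x hx y hy
    simp only [List.head?_cons, Option.mem_def, Option.some.injEq] at hy
    rw [List.getLast?_concat] at hx
    simp only [Option.mem_def, Option.some.injEq] at hx
    subst hx; subst hy
    exact hRab

private lemma cycChain_isRotated {l l' : List α} (h : List.Chain' R (l ++ l.take 1))
    (hr : l ~r l') : List.Chain' R (l' ++ l'.take 1) := by
  obtain ⟨n, rfl⟩ := hr
  induction n with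
  | zero => simpa using h
  | succ k ih =>
    have : (l.rotate k).rotate 1 = l.rotate (k + 1) := by rw [List.rotate_rotate]
    rw [← this]
    exact cycChain_rotate_one ih

variable {V : Type*}

private lemma altChain_isRotated {red : Sym2 V → Prop} {l l' : List (Sym2 V)}
    (h : AltChain red l) (hr : l ~r l') : AltChain red l' :=
  cycChain_isRotated h hr

private lemma endpoint_mem_getLast_edges {S : SimpleGraph V} {a b : V} (p : S.Walk a b)
    (h : p.edges ≠ []) : b ∈ p.edges.getLast h := by
  have hd : p.darts ≠ [] := by
    intro hd; apply h; simp [SimpleGraph.Walk.edges, hd]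
  have heq : p.edges.getLast h = (p.darts.getLast hd).edge := by
    have : p.edges = p.darts.map SimpleGraph.Dart.edge := rfl
    simp only [this]
    rw [List.getLast_map]
  rw [heq, SimpleGraph.Dart.edge, Sym2.mem_iff]
  right
  exact (by rw [p.getLast_darts_eq_lastDart hd]; rfl)

private lemma head_mem_head_edges {S : SimpleGraph V} {a b : V} (p : S.Walk a b)
    (h : p.edges ≠ []) : a ∈ p.edges.head h := by
  have hd : p.darts ≠ [] := by
    intro hd; apply h; simp [SimpleGraph.Walk.edges, hd]
  have heq : p.edges.head h = (p.darts.head hd).edge := by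
    have : p.edges = p.darts.map SimpleGraph.Dart.edge := rfl
    simp only [this]
    rw [List.head_map]
  rw [heq, SimpleGraph.Dart.edge, Sym2.mem_iff]
  left
  exact (by rw [p.head_darts_eq_firstDart hd]; rfl)

private lemma adj_of_mem_edge {S : SimpleGraph V} {e : Sym2 V} (he : e ∈ S.edgeSet) {x : V}
    (hx : x ∈ e) : ∃ u, S.Adj x u ∧ e = s(x, u) := by
  induction e with
  | _ a b =>
    rcases Sym2.mem_iff.mp hx with rfl | rfl
    · exact ⟨b, he, rfl⟩
    · exact ⟨a, (S.mem_edgeSet.mp he).symm, Sym2.eq_swap⟩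

private lemma exists_red_blue [DecidableEq V] {S : SimpleGraph V} {red : Sym2 V → Prop} {v : V}
    {p : S.Walk v v} (he : p.IsEulerian) (hc : AltChain red p.edges) {x : V}
    (hx : (S.neighborSet x).Nonempty) :
    (∃ u, S.Adj x u ∧ red s(x, u)) ∧ (∃ u, S.Adj x u ∧ ¬ red s(x, u)) := by
  obtain ⟨u0, hu0⟩ := hx
  have hmem : s(x, u0) ∈ p.edges := (he.mem_edges_iff).mpr hu0
  have hxs : x ∈ p.support := p.fst_mem_support_of_mem_edges hmem
  have hrot : (p.rotate x hxs).edges ~r p.edges := p.rotate_edges x hxs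
  have hcq : AltChain red (p.rotate x hxs).edges := altChain_isRotated hc hrot.symm
  have hqe : (p.rotate x hxs).edges ≠ [] := by
    intro h0
    have := hrot.perm.mem_iff (a := s(x, u0))
    rw [h0] at this
    simp at this
    exact this hmem
  set l := (p.rotate x hxs).edges with hl
  have hhead : x ∈ l.head hqe := head_mem_head_edges _ hqe
  have hlast : x ∈ l.getLast hqe := endpoint_mem_getLast_edges _ hqe
  have hchain : ¬ (red (l.getLast hqe) ↔ red (l.head hqe)) := by
    have htake : l.take 1 = [l.head hqe] := by
      conv_lhs => rw [← List.cons_head_tail hqe]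
      rfl
    have h2 := hcq
    rw [AltChain, htake, (show ∀ (r : Sym2 V → Sym2 V → Prop) (l : List (Sym2 V)), List.Chain' r l ↔ List.IsChain r l from fun _ _ => Iff.rfl), List.isChain_append] at h2
    refine h2.2.2 _ ?_ _ (by simp)
    rw [List.getLast?_eq_getLast hqe]; rfl
  have hheadS : l.head hqe ∈ S.edgeSet :=
    SimpleGraph.Walk.edges_subset_edgeSet _ (List.head_mem hqe)
  have hlastS : l.getLast hqe ∈ S.edgeSet :=
    SimpleGraph.Walk.edges_subset_edgeSet _ (List.getLast_mem hqe)
  obtain ⟨u1, hu1, he1⟩ := adj_of_mem_edge hlastS hlast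
  obtain ⟨u2, hu2, he2⟩ := adj_of_mem_edge hheadS hhead
  rw [he1, he2] at hchain
  by_cases hred : red s(x, u2)
  · exact ⟨⟨u2, hu2, hred⟩, ⟨u1, hu1, by tauto⟩⟩
  · exact ⟨⟨u1, hu1, by tauto⟩, ⟨u2, hu2, hred⟩⟩

private lemma neighbor_split [Fintype V] (S : SimpleGraph V) (P : V → Prop) (x : V) :
    {u | S.Adj x u ∧ P u}.ncard + {u | S.Adj x u ∧ ¬ P u}.ncard
      = (S.neighborSet x).ncard := by
  classical
  rw [← Set.ncard_union_eq]
  · congr 1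
    ext u
    simp only [Set.mem_union, Set.mem_setOf_eq, SimpleGraph.mem_neighborSet]
    tauto
  · rw [Set.disjoint_left]; rintro u ⟨_, h1⟩ ⟨_, h2⟩; exact h2 h1

private lemma even_ncard_neighborSet [Fintype V] [DecidableEq V] {S : SimpleGraph V} {v : V}
    {p : S.Walk v v} (he : p.IsEulerian) (x : V) : Even (S.neighborSet x).ncard := by
  classical
  have : Even (S.degree x) := by
    rw [he.even_degree_iff]
    intro h; exact absurd rfl h
  convert this using 1
  rw [Set.ncard_eq_toFinset_card']
  rfl

/-- red/blue balance of `X` at every vertex, where red means "edge of `H`". -/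
private def Bal (H X : SimpleGraph V) : Prop :=
  ∀ x : V, {u | X.Adj x u ∧ H.Adj x u}.ncard = {u | X.Adj x u ∧ ¬ H.Adj x u}.ncard

private lemma bal_of_minimalAC [Fintype V] {S H : SimpleGraph V}
    (h : IsMinimalAC S (fun e => e ∈ H.edgeSet)) : Bal H S := by
  letI := Classical.decEq V
  obtain ⟨⟨v, p, hE, hAlt⟩, hbd⟩ := h
  intro x
  have hsetr : {u | S.Adj x u ∧ (fun e => e ∈ H.edgeSet) s(x, u)} = {u | S.Adj x u ∧ H.Adj x u} := by
    ext u; simp [SimpleGraph.mem_edgeSet]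
  have hsetb : {u | S.Adj x u ∧ ¬ (fun e => e ∈ H.edgeSet) s(x, u)}
      = {u | S.Adj x u ∧ ¬ H.Adj x u} := by
    ext u; simp [SimpleGraph.mem_edgeSet]
  have hb1 : {u | S.Adj x u ∧ H.Adj x u}.ncard ≤ 2 := hsetr ▸ (hbd x).1
  have hb2 : {u | S.Adj x u ∧ ¬ H.Adj x u}.ncard ≤ 2 := hsetb ▸ (hbd x).2
  by_cases hne : (S.neighborSet x).Nonempty
  · obtain ⟨⟨u1, hu1, hr1⟩, ⟨u2, hu2, hr2⟩⟩ :=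
      exists_red_blue (red := fun e => e ∈ H.edgeSet) hE hAlt hne
    have h1 : 0 < {u | S.Adj x u ∧ H.Adj x u}.ncard := by
      rw [Set.ncard_pos (Set.toFinite _)]
      exact ⟨u1, hu1, H.mem_edgeSet.mp hr1⟩
    have h2 : 0 < {u | S.Adj x u ∧ ¬ H.Adj x u}.ncard := by
      rw [Set.ncard_pos (Set.toFinite _)]
      exact ⟨u2, hu2, fun hc => hr2 (H.mem_edgeSet.mpr hc)⟩
    have hsum := neighbor_split S (fun u => H.Adj x u) x
    have heven := even_ncard_neighborSet hE x
    rw [← hsum] at heven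
    obtain ⟨k, hk⟩ := heven
    omega
  · rw [Set.not_nonempty_iff_eq_empty] at hne
    have e1 : {u | S.Adj x u ∧ H.Adj x u} = ∅ := by
      ext u; simp only [Set.mem_setOf_eq, Set.mem_empty_iff_false, iff_false]
      rintro ⟨ha, -⟩
      exact absurd (hne ▸ ha : u ∈ (∅ : Set V)) (Set.notMem_empty u)
    have e2 : {u | S.Adj x u ∧ ¬ H.Adj x u} = ∅ := by
      ext u; simp only [Set.mem_setOf_eq, Set.mem_empty_iff_false, iff_false]
      rintro ⟨ha, -⟩
      exact absurd (hne ▸ ha : u ∈ (∅ : Set V)) (Set.notMem_empty u)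
    rw [e1, e2]

private lemma switching_adj {H X : SimpleGraph V} {u v : V} :
    (switching H X).Adj u v ↔ (H.Adj u v ∧ ¬ X.Adj u v) ∨ (X.Adj u v ∧ ¬ H.Adj u v) := Iff.rfl

private lemma edgeSet_switching (H X : SimpleGraph V) :
    (switching H X).edgeSet = (H.edgeSet \ X.edgeSet) ∪ (X.edgeSet \ H.edgeSet) := by
  ext e
  induction e with
  | _ a b =>
    simp only [SimpleGraph.mem_edgeSet, Set.mem_union, Set.mem_diff, switching_adj]

/-- weight difference caused by switching along `X`. -/
private noncomputable def Wd (w : Sym2 V → ℝ) (H X : SimpleGraph V) : ℝ :=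
  (∑ᶠ e ∈ X.edgeSet \ H.edgeSet, w e) - (∑ᶠ e ∈ X.edgeSet ∩ H.edgeSet, w e)

private lemma wt_switching [Fintype V] (w : Sym2 V → ℝ) (H X : SimpleGraph V) :
    wt w (switching H X) = wt w H + Wd w H X := by
  classical
  have h1 : wt w (switching H X)
      = (∑ᶠ e ∈ H.edgeSet \ X.edgeSet, w e) + (∑ᶠ e ∈ X.edgeSet \ H.edgeSet, w e) := by
    rw [wt, edgeSet_switching, finsum_mem_union]
    · exact disjoint_sdiff_sdiff
    · exact Set.toFinite _
    · exact Set.toFinite _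
  have h2 : wt w H
      = (∑ᶠ e ∈ H.edgeSet \ X.edgeSet, w e) + (∑ᶠ e ∈ H.edgeSet ∩ X.edgeSet, w e) := by
    rw [wt, ← finsum_mem_union ((Set.disjoint_sdiff_left).mono_right Set.inter_subset_right) (Set.toFinite _) (Set.toFinite _),
      Set.diff_union_inter]
  have h3 : (∑ᶠ e ∈ H.edgeSet ∩ X.edgeSet, w e) = (∑ᶠ e ∈ X.edgeSet ∩ H.edgeSet, w e) := by
    rw [Set.inter_comm]
  rw [h1, h2, Wd, h3]
  ring

private lemma Wd_bot (w : Sym2 V → ℝ) (H : SimpleGraph V) : Wd w H ⊥ = 0 := by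
  simp [Wd]

private lemma Wd_sup [Fintype V] (w : Sym2 V → ℝ) {H a b : SimpleGraph V}
    (hd : Disjoint a.edgeSet b.edgeSet) : Wd w H (a ⊔ b) = Wd w H a + Wd w H b := by
  classical
  have e1 : (a ⊔ b).edgeSet \ H.edgeSet
      = (a.edgeSet \ H.edgeSet) ∪ (b.edgeSet \ H.edgeSet) := by
    rw [SimpleGraph.edgeSet_sup, Set.union_diff_distrib]
  have e2 : (a ⊔ b).edgeSet ∩ H.edgeSet
      = (a.edgeSet ∩ H.edgeSet) ∪ (b.edgeSet ∩ H.edgeSet) := by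
    rw [SimpleGraph.edgeSet_sup, Set.union_inter_distrib_right]
  rw [Wd, e1, e2, finsum_mem_union (hd.mono (Set.diff_subset) (Set.diff_subset))
      (Set.toFinite _) (Set.toFinite _),
    finsum_mem_union (hd.mono (Set.inter_subset_left) (Set.inter_subset_left))
      (Set.toFinite _) (Set.toFinite _), Wd, Wd]
  ring

private lemma Bal_bot (H : SimpleGraph V) : Bal H ⊥ := by
  intro x
  simp

private lemma Bal_sup [Fintype V] {H a b : SimpleGraph V}
    (hd : Disjoint a.edgeSet b.edgeSet) (ha : Bal H a) (hb : Bal H b) : Bal H (a ⊔ b) := by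
  intro x
  have hdisjn : ∀ P : V → Prop, Disjoint {u | a.Adj x u ∧ P u} {u | b.Adj x u ∧ P u} := by
    intro P
    rw [Set.disjoint_left]
    rintro u ⟨h1, -⟩ ⟨h2, -⟩
    exact (Set.disjoint_left.mp hd (a.mem_edgeSet.mpr h1)) (b.mem_edgeSet.mpr h2)
  have e1 : {u | (a ⊔ b).Adj x u ∧ H.Adj x u}
      = {u | a.Adj x u ∧ H.Adj x u} ∪ {u | b.Adj x u ∧ H.Adj x u} := by
    ext u; simp only [Set.mem_setOf_eq, Set.mem_union, SimpleGraph.sup_adj]; tauto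
  have e2 : {u | (a ⊔ b).Adj x u ∧ ¬ H.Adj x u}
      = {u | a.Adj x u ∧ ¬ H.Adj x u} ∪ {u | b.Adj x u ∧ ¬ H.Adj x u} := by
    ext u; simp only [Set.mem_setOf_eq, Set.mem_union, SimpleGraph.sup_adj]; tauto
  classical
  rw [e1, e2, Set.ncard_union_eq (hdisjn _) (Set.toFinite _) (Set.toFinite _),
    Set.ncard_union_eq (hdisjn _) (Set.toFinite _) (Set.toFinite _), ha x, hb x]

private lemma edgeSet_sSup' (𝒜 : Set (SimpleGraph V)) :
    (sSup 𝒜).edgeSet = ⋃ s ∈ 𝒜, s.edgeSet := by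
  ext e
  induction e with
  | _ a b =>
    simp only [SimpleGraph.mem_edgeSet, SimpleGraph.sSup_adj, Set.mem_iUnion]
    constructor
    · rintro ⟨G, hG, h⟩; exact ⟨G, hG, h⟩
    · rintro ⟨G, hG, h⟩; exact ⟨G, hG, h⟩

private lemma sSup_closure [Fintype V] (P : SimpleGraph V → Prop) (hbot : P ⊥)
    (hsup : ∀ a b : SimpleGraph V, Disjoint a.edgeSet b.edgeSet → P a → P b → P (a ⊔ b))
    (𝒜 : Set (SimpleGraph V))
    (hpw : 𝒜.Pairwise fun a b => Disjoint a.edgeSet b.edgeSet)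
    (hall : ∀ a ∈ 𝒜, P a) : P (sSup 𝒜) := by
  classical
  have hfin : 𝒜.Finite := Set.toFinite _
  refine Set.Finite.induction_on_subset (motive := fun s _ => P (sSup s)) 𝒜 hfin (by simpa using hbot) ?_
  rintro a s haA hsA has ih
  rw [sSup_insert]
  refine hsup _ _ ?_ (hall a haA) ih
  rw [edgeSet_sSup', Set.disjoint_iUnion₂_right]
  intro b hb
  exact hpw haA (hsA hb) (fun hab => has (hab ▸ hb))

private lemma isFFactor_switching [Fintype V] {G H X : SimpleGraph V} {f : V → ℕ}
    (hH : IsFFactor G H f) (hXG : X ≤ G) (hbal : Bal H X) :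
    IsFFactor G (switching H X) f := by
  classical
  constructor
  · intro u v h
    rcases h with ⟨h1, -⟩ | ⟨h1, -⟩
    · exact hH.1 h1
    · exact hXG h1
  · intro x
    have hset : (switching H X).neighborSet x
        = ({u | H.Adj x u ∧ ¬ X.Adj x u}) ∪ ({u | X.Adj x u ∧ ¬ H.Adj x u}) := by
      ext u
      simp only [SimpleGraph.mem_neighborSet, switching_adj, Set.mem_union, Set.mem_setOf_eq]
    have hdisj : Disjoint {u | H.Adj x u ∧ ¬ X.Adj x u} {u | X.Adj x u ∧ ¬ H.Adj x u} := by
      rw [Set.disjoint_left]; rintro u ⟨h1, -⟩ ⟨-, h2⟩; exact h2 h1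
    rw [hset, Set.ncard_union_eq hdisj (Set.toFinite _) (Set.toFinite _)]
    have hsplitH := neighbor_split H (fun u => X.Adj x u) x
    have hcomm : {u | H.Adj x u ∧ X.Adj x u} = {u | X.Adj x u ∧ H.Adj x u} := by
      ext u; simp only [Set.mem_setOf_eq]; tauto
    have hHx := hH.2 x
    rw [← hHx, ← hsplitH, hcomm, hbal x]
    ring

end Aux

theorem stmt13 {V : Type*} [Fintype V] (G : SimpleGraph V) (w : Sym2 V → ℝ)
    (f : V → ℕ) (H H' : SimpleGraph V) (T : Set (Sym2 V))
    (hT : T ⊆ G.edgeSet \ H.edgeSet)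
    (hH : IsFFactor G H f)
    (hHmin : ∀ H2 : SimpleGraph V, IsFFactor G H2 f → wt w H ≤ wt w H2)
    (hH' : IsFFactor G H' f ∧ T ⊆ H'.edgeSet)
    (hH'min : ∀ H2 : SimpleGraph V, IsFFactor G H2 f → T ⊆ H2.edgeSet → wt w H' ≤ wt w H2)
    (𝒮 : Set (SimpleGraph V))
    (hmin : ∀ s ∈ 𝒮, IsMinimalAC s (fun e => e ∈ H.edgeSet))
    (hdisj : 𝒮.Pairwise fun a b => Disjoint a.edgeSet b.edgeSet)
    (hdecomp : (⋃ s ∈ 𝒮, s.edgeSet) = (switching H H').edgeSet) :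
    ∀ 𝒮' ⊆ 𝒮, T ⊆ (⋃ s ∈ 𝒮', s.edgeSet) →
      wt w (switching H (sSup 𝒮')) = wt w H' := by
  classical
  intro 𝒮' h𝒮' hTsub
  have hSG : ∀ s ∈ 𝒮, s ≤ G := by
    intro s hs
    rw [← SimpleGraph.edgeSet_subset_edgeSet]
    intro e he
    have hmem : e ∈ (switching H H').edgeSet := hdecomp ▸ Set.mem_biUnion hs he
    rw [edgeSet_switching] at hmem
    rcases hmem with ⟨h1, -⟩ | ⟨h1, -⟩
    · exact (SimpleGraph.edgeSet_subset_edgeSet.mpr hH.1) h1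
    · exact (SimpleGraph.edgeSet_subset_edgeSet.mpr hH'.1.1) h1
  have hP : ∀ s ∈ 𝒮, Bal H s ∧ 0 ≤ Wd w H s := by
    intro s hs
    have hbal := bal_of_minimalAC (hmin s hs)
    refine ⟨hbal, ?_⟩
    have hff := isFFactor_switching hH (hSG s hs) hbal
    have hle := hHmin _ hff
    rw [wt_switching] at hle
    linarith
  have hclosure : ∀ 𝒜 ⊆ 𝒮, Bal H (sSup 𝒜) ∧ 0 ≤ Wd w H (sSup 𝒜) := by
    intro 𝒜 h𝒜
    refine sSup_closure (fun X => Bal H X ∧ 0 ≤ Wd w H X) ⟨Bal_bot H, by rw [Wd_bot]⟩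
      ?_ 𝒜 (hdisj.mono h𝒜) (fun a ha => hP a (h𝒜 ha))
    rintro a b hd ⟨ba, wa⟩ ⟨bb, wb⟩
    refine ⟨Bal_sup hd ba bb, ?_⟩
    rw [Wd_sup w hd]
    linarith
  have hA := hclosure 𝒮' h𝒮'
  have hB := hclosure (𝒮 \ 𝒮') Set.diff_subset
  have hdisjAB : Disjoint (sSup 𝒮').edgeSet (sSup (𝒮 \ 𝒮')).edgeSet := by
    rw [edgeSet_sSup', edgeSet_sSup', Set.disjoint_iUnion₂_left]
    intro a ha
    rw [Set.disjoint_iUnion₂_right]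
    intro b hb
    exact hdisj (h𝒮' ha) hb.1 (fun hab => hb.2 (hab ▸ ha))
  have hAB : sSup 𝒮 = sSup 𝒮' ⊔ sSup (𝒮 \ 𝒮') := by
    rw [← sSup_union, Set.union_diff_cancel h𝒮']
  have hWdS : Wd w H (sSup 𝒮) = Wd w H (sSup 𝒮') + Wd w H (sSup (𝒮 \ 𝒮')) := by
    rw [hAB, Wd_sup w hdisjAB]
  have hswH' : switching H (sSup 𝒮) = H' := by
    have hedge : (sSup 𝒮).edgeSet = (switching H H').edgeSet := by
      rw [edgeSet_sSup', hdecomp]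
    ext u v
    have hadj : (sSup 𝒮).Adj u v ↔ (switching H H').Adj u v := by
      rw [← SimpleGraph.mem_edgeSet, ← SimpleGraph.mem_edgeSet, hedge]
    simp only [switching_adj] at hadj ⊢
    tauto
  have hwtH' : wt w H' = wt w H + Wd w H (sSup 𝒮) := by
    rw [← hswH', wt_switching]
  have hwtA : wt w (switching H (sSup 𝒮')) = wt w H + Wd w H (sSup 𝒮') :=
    wt_switching w H (sSup 𝒮')
  have hAG : sSup 𝒮' ≤ G := sSup_le (fun s hs => hSG s (h𝒮' hs))
  have hffA := isFFactor_switching hH hAG hA.1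
  have hTcont : T ⊆ (switching H (sSup 𝒮')).edgeSet := by
    intro e he
    rw [edgeSet_switching]
    right
    refine ⟨?_, (hT he).2⟩
    rw [edgeSet_sSup']
    exact hTsub he
  have hlow := hH'min _ hffA hTcont
  have hBnn := hB.2
  linarith
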